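/- arXiv:1705.06993 — 3 statements merged into one kernel-verified Lean document; each statement's English description precedes it below -/
import Mathlib

section
/- For integers 0 < i < h ≤ k < l, the inequality C(k,i)·C(l,h) > C(k,h)·C(l,i) holds, where C(n,r) denotes the binomial coefficient. -/
lemma step_lemma (r k l : ℕ) (hrk : r ≤ k) (hkl : k < l) :
    k.choose (r+1) * l.choose r < k.choose r * l.choose (r+1) := by
  have hk : 0 < k.choose r := Nat.choose_pos hrk
  have hl : 0 < l.choose (r+1) := Nat.choose_pos (Nat.lt_of_le_of_lt hrk hkl)
  have hlr : 0 < l.choose r := Nat.choose_pos (le_of_lt (Nat.lt_of_le_of_lt hrk hkl))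
  have key : (r+1) * (k.choose (r+1) * l.choose r) < (r+1) * (k.choose r * l.choose (r+1)) := by
    have e1 : k.choose (r+1) * (r+1) = k.choose r * (k - r) := Nat.choose_succ_right_eq k r
    have e2 : l.choose (r+1) * (r+1) = l.choose r * (l - r) := Nat.choose_succ_right_eq l r
    calc (r+1) * (k.choose (r+1) * l.choose r)
        = (k.choose (r+1) * (r+1)) * l.choose r := by ring
      _ = (k.choose r * (k - r)) * l.choose r := by rw [e1]
      _ = k.choose r * l.choose r * (k - r) := by ring
      _ < k.choose r * l.choose r * (l - r) := by
          exact Nat.mul_lt_mul_of_pos_left (Nat.sub_lt_sub_right hrk hkl) (Nat.mul_pos hk hlr)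
      _ = (l.choose r * (l - r)) * k.choose r := by ring
      _ = (l.choose (r+1) * (r+1)) * k.choose r := by rw [e2]
      _ = (r+1) * (k.choose r * l.choose (r+1)) := by ring
  exact Nat.lt_of_mul_lt_mul_left key

theorem stmt_0 (i h k l : ℕ) (hi : 0 < i) (hih : i < h) (hhk : h ≤ k) (hkl : k < l) :
    k.choose h * l.choose i < k.choose i * l.choose h := by
  induction h, hih using Nat.le_induction with
  | base => exact step_lemma i k l (le_of_lt (Nat.lt_of_lt_of_le (Nat.lt_succ_self i) hhk)) hkl
  | succ h hih ih =>
    have hhk' : h ≤ k := le_of_lt (Nat.lt_of_lt_of_le (Nat.lt_succ_self h) hhk)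
    have A := ih hhk'
    have B := step_lemma h k l hhk' hkl
    have hpos : 0 < k.choose h * l.choose h :=
      Nat.mul_pos (Nat.choose_pos hhk') (Nat.choose_pos (le_of_lt (Nat.lt_of_le_of_lt hhk' hkl)))
    have key : (k.choose h * l.choose h) * (k.choose (h+1) * l.choose i)
        < (k.choose h * l.choose h) * (k.choose i * l.choose (h+1)) := by
      calc (k.choose h * l.choose h) * (k.choose (h+1) * l.choose i)
          = (k.choose (h+1) * l.choose h) * (k.choose h * l.choose i) := by ring
        _ < (k.choose h * l.choose (h+1)) * (k.choose i * l.choose h) :=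
            Nat.mul_lt_mul_of_lt_of_lt B A
        _ = (k.choose h * l.choose h) * (k.choose i * l.choose (h+1)) := by ring
    exact Nat.lt_of_mul_lt_mul_left key
end

section
/- Let 1 ≤ k < l be integers and define g_k(y,ξ) = 1 - (1/4^k)∑_{h=0}^k C(k,h)·y^h/(1+ξh). Then the Jacobian determinant (∂g_k/∂y)(∂g_l/∂ξ) - (∂g_l/∂y)(∂g_k/∂ξ) equals ∑_{h=1}^k ∑_{i=1}^l C(k,h)C(l,i)·ξ·h·i·(i-h)·y^{i+h-1} / ((1+ξh)²(1+ξi)²) up to the positive factor 1/4^{k+l}, and this expression is strictly positive for all y, ξ > 0. -/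
open Finset

/-- The reparametrized expected k-mer distance g_k(y, ξ). -/
noncomputable def gkmer (k : ℕ) (y ξ : ℝ) : ℝ :=
  1 - (1 / 4 ^ k) * ∑ h ∈ Finset.range (k + 1), (k.choose h : ℝ) * y ^ h / (1 + ξ * h)

lemma range_eq_aux (k : ℕ) : Finset.range (k+1) = insert 0 (Finset.Icc 1 k) := by
  ext x; simp [Finset.mem_range, Finset.mem_Icc]; omega

lemma deriv_gkmer_y (k : ℕ) (y ξ : ℝ) :
    deriv (fun y' => gkmer k y' ξ) y
      = -(1/4^k) * ∑ h ∈ Finset.Icc 1 k, (k.choose h : ℝ) * h * y^(h-1) / (1+ξ*h) := by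
  have H : HasDerivAt (fun y' => gkmer k y' ξ)
      (-((1/4^k : ℝ) * ∑ h ∈ Finset.range (k+1),
        (k.choose h : ℝ) * ((h:ℝ) * y^(h-1)) / (1+ξ*h))) y := by
    have hs : HasDerivAt (fun y' : ℝ => ∑ h ∈ Finset.range (k+1),
        (k.choose h : ℝ) * y' ^ h / (1 + ξ * h))
        (∑ h ∈ Finset.range (k+1), (k.choose h : ℝ) * ((h:ℝ) * y^(h-1)) / (1+ξ*h)) y := by
      apply HasDerivAt.fun_sum
      intro h _
      exact ((hasDerivAt_pow h y).const_mul ((k.choose h : ℝ))).div_const _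
    simpa [gkmer] using (hs.const_mul ((1:ℝ)/4^k)).const_sub 1
  rw [H.deriv]
  rw [range_eq_aux, Finset.sum_insert (by simp)]
  simp only [Nat.cast_zero, zero_mul, mul_zero, zero_div, zero_add]
  rw [neg_mul]
  congr 2
  apply Finset.sum_congr rfl
  intro h _
  ring

lemma deriv_gkmer_xi (k : ℕ) (y ξ : ℝ) (hξ : 0 < ξ) :
    deriv (fun ξ' => gkmer k y ξ') ξ
      = (1/4^k) * ∑ i ∈ Finset.Icc 1 k, (k.choose i : ℝ) * i * y^i / (1+ξ*i)^2 := by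
  have hs : HasDerivAt (fun ξ' : ℝ => ∑ i ∈ Finset.range (k+1),
      (k.choose i : ℝ) * y ^ i / (1 + ξ' * i))
      (∑ i ∈ Finset.range (k+1), -((k.choose i : ℝ) * (i:ℝ) * y^i / (1+ξ*i)^2)) ξ := by
    apply HasDerivAt.fun_sum
    intro i _
    have hd : HasDerivAt (fun ξ' : ℝ => 1 + ξ' * i) (i:ℝ) ξ := by
      simpa using ((hasDerivAt_id ξ).mul_const (i:ℝ)).const_add 1
    have hne : (1 + ξ * i) ≠ 0 := by positivity
    have := (hasDerivAt_const ξ ((k.choose i : ℝ) * y ^ i)).div hd hne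
    refine this.congr_deriv ?_
    ring
  have H2 := (hs.const_mul ((1:ℝ)/4^k)).const_sub 1
  have hfun : (fun ξ' => gkmer k y ξ')
      = fun ξ' : ℝ => 1 - (1/4^k) * ∑ i ∈ Finset.range (k+1),
          (k.choose i : ℝ) * y ^ i / (1 + ξ' * i) := rfl
  rw [hfun, H2.deriv, Finset.sum_neg_distrib, mul_neg, neg_neg]
  congr 1
  rw [range_eq_aux, Finset.sum_insert (by simp)]
  simp

lemma choose_ineq_aux {h i k l : ℕ} (hhi : h ≤ i) (hik : i ≤ k) (hkl : k ≤ l) :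
    k.choose i * l.choose h ≤ k.choose h * l.choose i := by
  have e1 : k.choose i * i.choose h = k.choose h * (k - h).choose (i - h) :=
    Nat.choose_mul hhi
  have e2 : l.choose i * i.choose h = l.choose h * (l - h).choose (i - h) :=
    Nat.choose_mul hhi
  have hm : (k - h).choose (i - h) ≤ (l - h).choose (i - h) :=
    Nat.choose_le_choose _ (by omega)
  have hpos : 0 < i.choose h := Nat.choose_pos hhi
  have key : k.choose i * l.choose h * i.choose h ≤ k.choose h * l.choose i * i.choose h := by
    calc k.choose i * l.choose h * i.choose h
        = (k.choose i * i.choose h) * l.choose h := by ring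
      _ = k.choose h * (k - h).choose (i - h) * l.choose h := by rw [e1]
      _ ≤ k.choose h * (l - h).choose (i - h) * l.choose h :=
          Nat.mul_le_mul_right _ (Nat.mul_le_mul_left _ hm)
      _ = (l.choose i * i.choose h) * k.choose h := by rw [e2]; ring
      _ = k.choose h * l.choose i * i.choose h := by ring
  exact Nat.le_of_mul_le_mul_right key hpos

lemma bracket_nonneg_aux {k l : ℕ} (hkl : k ≤ l) {h i : ℕ} (hh : h ≤ k) (hi : i ≤ k) :
    0 ≤ (k.choose h : ℝ) * (l.choose i) * ((i:ℝ) - h)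
        + (k.choose i : ℝ) * (l.choose h) * ((h:ℝ) - i) := by
  rcases le_total h i with hle | hle
  · have hc : (k.choose i : ℝ) * (l.choose h) ≤ (k.choose h : ℝ) * (l.choose i) := by
      exact_mod_cast choose_ineq_aux hle hi hkl
    have hd : (0:ℝ) ≤ (i:ℝ) - h := by
      have : (h:ℝ) ≤ i := by exact_mod_cast hle
      linarith
    nlinarith
  · have hc : (k.choose h : ℝ) * (l.choose i) ≤ (k.choose i : ℝ) * (l.choose h) := by
      exact_mod_cast choose_ineq_aux hle hh hkl
    have hd : (0:ℝ) ≤ (h:ℝ) - i := by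
      have : (i:ℝ) ≤ h := by exact_mod_cast hle
      linarith
    nlinarith

lemma term_eq_aux (ch ci ξ y : ℝ) (h i : ℕ) (hh : 1 ≤ h) (hi : 1 ≤ i) (hξ : 0 < ξ) :
    ci * i * y^(i-1) / (1+ξ*i) * (ch * h * y^h / (1+ξ*h)^2)
      - ch * h * y^(h-1) / (1+ξ*h) * (ci * i * y^i / (1+ξ*i)^2)
    = ch * ci * ξ * h * i * ((i:ℝ) - h) * y^(i+h-1) / ((1+ξ*h)^2 * (1+ξ*i)^2) := by
  obtain ⟨h', rfl⟩ : ∃ h', h = h' + 1 := ⟨h - 1, by omega⟩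
  obtain ⟨i', rfl⟩ : ∃ i', i = i' + 1 := ⟨i - 1, by omega⟩
  simp only [Nat.add_sub_cancel]
  rw [show i' + 1 + (h' + 1) - 1 = i' + h' + 1 from by omega]
  have ha : (1 + ξ * (h'+1) : ℝ) ≠ 0 := by positivity
  have hb : (1 + ξ * (i'+1) : ℝ) ≠ 0 := by positivity
  push_cast at ha hb ⊢
  field_simp
  ring

/-- The summand of the Jacobian double sum. -/
noncomputable def Fterm (k l : ℕ) (y ξ : ℝ) (h i : ℕ) : ℝ :=
  (k.choose h : ℝ) * (l.choose i : ℝ) * ξ * h * i * ((i : ℝ) - h) *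
    y ^ (i + h - 1) / ((1 + ξ * h) ^ 2 * (1 + ξ * i) ^ 2)

lemma Fadd_nonneg (k l : ℕ) (hkl : k ≤ l) (y ξ : ℝ) (hy : 0 < y) (hξ : 0 < ξ)
    {h i : ℕ} (hh1 : 1 ≤ h) (hhk : h ≤ k) (hi1 : 1 ≤ i) (hik : i ≤ k) :
    0 ≤ Fterm k l y ξ h i + Fterm k l y ξ i h := by
  have hbr := bracket_nonneg_aux hkl hhk hik
  have heq : Fterm k l y ξ h i + Fterm k l y ξ i h
      = ((k.choose h : ℝ) * (l.choose i) * ((i:ℝ) - h)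
          + (k.choose i : ℝ) * (l.choose h) * ((h:ℝ) - i))
        * (ξ * h * i * y ^ (i + h - 1)) / ((1 + ξ * h) ^ 2 * (1 + ξ * i) ^ 2) := by
    unfold Fterm
    rw [show h + i - 1 = i + h - 1 from by omega]
    have ha : (1 + ξ * h : ℝ) ≠ 0 := by positivity
    have hb : (1 + ξ * i : ℝ) ≠ 0 := by positivity
    field_simp
  rw [heq]
  apply div_nonneg _ (by positivity)
  exact mul_nonneg hbr (by positivity)

theorem stmt_7 (k l : ℕ) (hk : 1 ≤ k) (hkl : k < l) (y ξ : ℝ) (hy : 0 < y) (hξ : 0 < ξ) :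
    (deriv (fun y' => gkmer k y' ξ) y * deriv (fun ξ' => gkmer l y ξ') ξ
      - deriv (fun y' => gkmer l y' ξ) y * deriv (fun ξ' => gkmer k y ξ') ξ
      = (1 / 4 ^ (k + l)) * ∑ h ∈ Finset.Icc 1 k, ∑ i ∈ Finset.Icc 1 l,
          (k.choose h : ℝ) * (l.choose i : ℝ) * ξ * h * i * ((i : ℝ) - h) *
            y ^ (i + h - 1) / ((1 + ξ * h) ^ 2 * (1 + ξ * i) ^ 2)) ∧
    0 < deriv (fun y' => gkmer k y' ξ) y * deriv (fun ξ' => gkmer l y ξ') ξ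
      - deriv (fun y' => gkmer l y' ξ) y * deriv (fun ξ' => gkmer k y ξ') ξ := by
  have hkl' : k ≤ l := hkl.le
  have hmain : deriv (fun y' => gkmer k y' ξ) y * deriv (fun ξ' => gkmer l y ξ') ξ
      - deriv (fun y' => gkmer l y' ξ) y * deriv (fun ξ' => gkmer k y ξ') ξ
      = (1 / 4 ^ (k + l)) * ∑ h ∈ Finset.Icc 1 k, ∑ i ∈ Finset.Icc 1 l, Fterm k l y ξ h i := by
    rw [deriv_gkmer_y k y ξ, deriv_gkmer_xi l y ξ hξ, deriv_gkmer_y l y ξ,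
      deriv_gkmer_xi k y ξ hξ]
    have key : (∑ i ∈ Finset.Icc 1 l, (l.choose i : ℝ) * i * y^(i-1) / (1+ξ*i))
          * (∑ h ∈ Finset.Icc 1 k, (k.choose h : ℝ) * h * y^h / (1+ξ*h)^2)
        - (∑ h ∈ Finset.Icc 1 k, (k.choose h : ℝ) * h * y^(h-1) / (1+ξ*h))
          * (∑ i ∈ Finset.Icc 1 l, (l.choose i : ℝ) * i * y^i / (1+ξ*i)^2)
        = ∑ h ∈ Finset.Icc 1 k, ∑ i ∈ Finset.Icc 1 l, Fterm k l y ξ h i := by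
      rw [Finset.sum_mul_sum, Finset.sum_mul_sum, Finset.sum_comm, ← Finset.sum_sub_distrib]
      refine Finset.sum_congr rfl fun h hh => ?_
      rw [← Finset.sum_sub_distrib]
      refine Finset.sum_congr rfl fun i hi => ?_
      simp only [Finset.mem_Icc] at hh hi
      exact term_eq_aux _ _ ξ y h i hh.1 hi.1 hξ
    rw [show (1:ℝ)/4^(k+l) = (1/4^k)*(1/4^l) from by rw [pow_add]; ring, ← key]
    ring
  have hS : 0 < ∑ h ∈ Finset.Icc 1 k, ∑ i ∈ Finset.Icc 1 l, Fterm k l y ξ h i := by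
    have hsplit : Finset.Icc 1 l = Finset.Icc 1 k ∪ Finset.Icc (k+1) l := by
      ext x; simp only [Finset.mem_Icc, Finset.mem_union]; omega
    have hdisj : Disjoint (Finset.Icc 1 k) (Finset.Icc (k+1) l) := by
      simp only [Finset.disjoint_left, Finset.mem_Icc]; omega
    have hdecomp : (∑ h ∈ Finset.Icc 1 k, ∑ i ∈ Finset.Icc 1 l, Fterm k l y ξ h i)
        = (∑ h ∈ Finset.Icc 1 k, ∑ i ∈ Finset.Icc 1 k, Fterm k l y ξ h i)
          + (∑ h ∈ Finset.Icc 1 k, ∑ i ∈ Finset.Icc (k+1) l, Fterm k l y ξ h i) := by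
      rw [← Finset.sum_add_distrib]
      refine Finset.sum_congr rfl fun h _ => ?_
      rw [hsplit, Finset.sum_union hdisj]
    rw [hdecomp]
    have h1 : 0 ≤ ∑ h ∈ Finset.Icc 1 k, ∑ i ∈ Finset.Icc 1 k, Fterm k l y ξ h i := by
      have hTT : (∑ h ∈ Finset.Icc 1 k, ∑ i ∈ Finset.Icc 1 k, Fterm k l y ξ h i)
          + (∑ h ∈ Finset.Icc 1 k, ∑ i ∈ Finset.Icc 1 k, Fterm k l y ξ h i)
          = ∑ h ∈ Finset.Icc 1 k, ∑ i ∈ Finset.Icc 1 k,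
              (Fterm k l y ξ h i + Fterm k l y ξ i h) := by
        nth_rewrite 2 [Finset.sum_comm]
        rw [← Finset.sum_add_distrib]
        exact Finset.sum_congr rfl fun h _ => (Finset.sum_add_distrib).symm
      have hnn : 0 ≤ ∑ h ∈ Finset.Icc 1 k, ∑ i ∈ Finset.Icc 1 k,
          (Fterm k l y ξ h i + Fterm k l y ξ i h) := by
        refine Finset.sum_nonneg fun h hh => Finset.sum_nonneg fun i hi => ?_
        simp only [Finset.mem_Icc] at hh hi
        exact Fadd_nonneg k l hkl' y ξ hy hξ hh.1 hh.2 hi.1 hi.2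
      linarith [hTT ▸ hnn]
    have h2 : 0 < ∑ h ∈ Finset.Icc 1 k, ∑ i ∈ Finset.Icc (k+1) l, Fterm k l y ξ h i := by
      refine Finset.sum_pos (fun h hh => ?_) (Finset.nonempty_Icc.mpr hk)
      refine Finset.sum_pos (fun i hi => ?_) (Finset.nonempty_Icc.mpr (by omega))
      simp only [Finset.mem_Icc] at hh hi
      have c1 : (0:ℝ) < k.choose h := by exact_mod_cast Nat.choose_pos hh.2
      have c2 : (0:ℝ) < l.choose i := by exact_mod_cast Nat.choose_pos hi.2
      have c3 : (0:ℝ) < (h:ℝ) := by exact_mod_cast Nat.lt_of_lt_of_le Nat.zero_lt_one hh.1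
      have c4 : (0:ℝ) < (i:ℝ) := by exact_mod_cast (by omega : 0 < i)
      have c5 : (0:ℝ) < (i:ℝ) - h := by
        have : (h:ℝ) < i := by exact_mod_cast (by omega : h < i)
        linarith
      unfold Fterm
      apply div_pos
      · exact mul_pos (mul_pos (mul_pos (mul_pos (mul_pos (mul_pos c1 c2) hξ) c3) c4) c5)
          (pow_pos hy _)
      · positivity
    linarith
  have hgoal : deriv (fun y' => gkmer k y' ξ) y * deriv (fun ξ' => gkmer l y ξ') ξ
      - deriv (fun y' => gkmer l y' ξ) y * deriv (fun ξ' => gkmer k y ξ') ξ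
      = (1 / 4 ^ (k + l)) * ∑ h ∈ Finset.Icc 1 k, ∑ i ∈ Finset.Icc 1 l,
          (k.choose h : ℝ) * (l.choose i : ℝ) * ξ * h * i * ((i : ℝ) - h) *
            y ^ (i + h - 1) / ((1 + ξ * h) ^ 2 * (1 + ξ * i) ^ 2) := hmain
  refine ⟨hgoal, ?_⟩
  rw [hmain]
  exact mul_pos (by positivity) hS
end

section
/- Let 1 ≤ k < l be integers. The map ψ: (0,∞)² → ℝ² given by ψ(y,ξ) = (g_k(y,ξ), g_l(y,ξ)), where g_k(y,ξ) = 1 - (1/4^k)∑_{h=0}^k C(k,h)·y^h/(1+ξh), is injective. -/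
open Finset

noncomputable def Fsum (k : ℕ) (y ξ : ℝ) : ℝ :=
  ∑ h ∈ Finset.range (k + 1), (k.choose h : ℝ) * y ^ h / (1 + ξ * h)

lemma psi_strictmono (p q : ℝ) (hp : 0 < p) (hpq : p < q) :
    StrictMonoOn (fun ξ : ℝ => q * Real.log (1 + ξ * p) - p * Real.log (1 + ξ * q)) (Set.Ici 0) := by
  have hq : 0 < q := hp.trans hpq
  apply strictMonoOn_of_deriv_pos (convex_Ici 0)
  · apply ContinuousOn.sub
    · exact continuousOn_const.mul (ContinuousOn.log (by fun_prop)
        (fun ξ hξ => by have : (0:ℝ) ≤ ξ := hξ; nlinarith))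
    · exact continuousOn_const.mul (ContinuousOn.log (by fun_prop)
        (fun ξ hξ => by have : (0:ℝ) ≤ ξ := hξ; nlinarith))
  · intro ξ hξ
    rw [interior_Ici] at hξ
    have hξ0 : (0:ℝ) < ξ := hξ
    have hA : (0:ℝ) < 1 + ξ * p := by nlinarith
    have hB : (0:ℝ) < 1 + ξ * q := by nlinarith
    have h1 : HasDerivAt (fun ξ : ℝ => 1 + ξ * p) p ξ := by
      simpa using ((hasDerivAt_id ξ).mul_const p).const_add 1
    have h2 : HasDerivAt (fun ξ : ℝ => 1 + ξ * q) q ξ := by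
      simpa using ((hasDerivAt_id ξ).mul_const q).const_add 1
    have hd : HasDerivAt (fun ξ : ℝ => q * Real.log (1 + ξ * p) - p * Real.log (1 + ξ * q))
        (q * (p / (1 + ξ * p)) - p * (q / (1 + ξ * q))) ξ :=
      ((h1.log hA.ne').const_mul q).sub ((h2.log hB.ne').const_mul p)
    rw [hd.deriv]
    have hAB : 1 + ξ * p < 1 + ξ * q := by nlinarith
    have : (p * q) / (1 + ξ * q) < (p * q) / (1 + ξ * p) :=
      div_lt_div_of_pos_left (by positivity) hA hAB
    rw [sub_pos]
    calc p * (q / (1 + ξ * q)) = (p*q)/(1+ξ*q) := by ring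
    _ < (p*q)/(1+ξ*p) := this
    _ = q * (p / (1 + ξ * p)) := by ring

lemma dpos (ξ1 ξ2 y1 y2 : ℝ) (hξ1 : 0 < ξ1) (hξ : ξ1 < ξ2) (hy1 : 0 < y1) (hy2 : 0 < y2)
    (p q : ℕ) (hp : 1 ≤ p) (hpq : p < q)
    (hdp : y1 ^ p * (1 + ξ2 * p) ≤ y2 ^ p * (1 + ξ1 * p)) :
    y1 ^ q * (1 + ξ2 * q) < y2 ^ q * (1 + ξ1 * q) := by
  have hpR : (0:ℝ) < p := by exact_mod_cast hp
  have hpqR : (p:ℝ) < q := by exact_mod_cast hpq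
  have hξ2 : (0:ℝ) < ξ2 := hξ1.trans hξ
  have hA1 : (0:ℝ) < 1 + ξ1 * p := by positivity
  have hA2 : (0:ℝ) < 1 + ξ2 * p := by positivity
  have hB1 : (0:ℝ) < 1 + ξ1 * q := by positivity
  have hB2 : (0:ℝ) < 1 + ξ2 * q := by positivity
  have hlog : (p:ℝ) * Real.log y1 + Real.log (1 + ξ2 * p)
      ≤ (p:ℝ) * Real.log y2 + Real.log (1 + ξ1 * p) := by
    have := (Real.log_le_log_iff (by positivity) (by positivity)).mpr hdp
    rwa [Real.log_mul (by positivity) hA2.ne', Real.log_mul (by positivity) hA1.ne',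
      Real.log_pow, Real.log_pow] at this
  have hpsi := psi_strictmono (p:ℝ) (q:ℝ) hpR hpqR (Set.mem_Ici.mpr hξ1.le)
      (Set.mem_Ici.mpr hξ2.le) hξ
  simp only at hpsi
  have key : (p:ℝ) * (Real.log (1 + ξ2 * q) - Real.log (1 + ξ1 * q))
      < (q:ℝ) * (Real.log (1 + ξ2 * p) - Real.log (1 + ξ1 * p)) := by linarith
  have goal_log : (q:ℝ) * Real.log y1 + Real.log (1 + ξ2 * q)
      < (q:ℝ) * Real.log y2 + Real.log (1 + ξ1 * q) := by
    have h2 : (p:ℝ) * (Real.log (1 + ξ2 * q) - Real.log (1 + ξ1 * q))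
        < (p:ℝ) * ((q:ℝ) * (Real.log y2 - Real.log y1)) := by nlinarith
    have := lt_of_mul_lt_mul_left h2 hpR.le
    linarith
  have : Real.log (y1 ^ q * (1 + ξ2 * q)) < Real.log (y2 ^ q * (1 + ξ1 * q)) := by
    rw [Real.log_mul (by positivity) hB2.ne', Real.log_mul (by positivity) hB1.ne',
      Real.log_pow, Real.log_pow]
    exact goal_log
  exact (Real.log_lt_log_iff (by positivity) (by positivity)).mp this

lemma choose_ratio_step (k l h : ℕ) (hk : h < k) (hkl : k ≤ l) :
    l.choose h * k.choose (h+1) ≤ l.choose (h+1) * k.choose h := by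
  have e1 : l.choose (h+1) * (h+1) = l.choose h * (l - h) := Nat.choose_succ_right_eq l h
  have e2 : k.choose (h+1) * (h+1) = k.choose h * (k - h) := Nat.choose_succ_right_eq k h
  have hsub : k - h ≤ l - h := Nat.sub_le_sub_right hkl h
  have : l.choose h * k.choose (h+1) * (h+1) ≤ l.choose (h+1) * k.choose h * (h+1) := by
    calc l.choose h * k.choose (h+1) * (h+1) = l.choose h * (k.choose (h+1) * (h+1)) := by ring
      _ = l.choose h * (k.choose h * (k - h)) := by rw [e2]
      _ ≤ l.choose h * (k.choose h * (l - h)) := by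
          exact Nat.mul_le_mul_left _ (Nat.mul_le_mul_left _ hsub)
      _ = (l.choose (h+1) * (h+1)) * k.choose h := by rw [e1]; ring
      _ = l.choose (h+1) * k.choose h * (h+1) := by ring
  exact Nat.le_of_mul_le_mul_right this (Nat.succ_pos h)

lemma ratio_mono (k l : ℕ) (hkl : k ≤ l) :
    ∀ p, p ≤ k → ∀ h, h ≤ p →
      (l.choose h : ℝ) / (k.choose h) ≤ (l.choose p : ℝ) / (k.choose p) := by
  intro p
  induction p with
  | zero => intro _ h hh; interval_cases h; simp
  | succ n ih =>
    intro hpk h hh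
    rcases Nat.lt_or_ge h (n+1) with hlt | hge
    · have h1 : (l.choose h : ℝ) / (k.choose h) ≤ (l.choose n : ℝ) / (k.choose n) :=
        ih (by omega) h (by omega)
      have h2 : (l.choose n : ℝ) / (k.choose n) ≤ (l.choose (n+1) : ℝ) / (k.choose (n+1)) := by
        have hCn : (0:ℝ) < k.choose n := by exact_mod_cast Nat.choose_pos (by omega : n ≤ k)
        have hCn1 : (0:ℝ) < k.choose (n+1) := by exact_mod_cast Nat.choose_pos hpk
        rw [div_le_div_iff₀ hCn hCn1]
        have := choose_ratio_step k l n (by omega) hkl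
        exact_mod_cast this
      exact h1.trans h2
    · have : h = n+1 := by omega
      simp [this]

lemma Fsum_lt_y (k : ℕ) (hk : 1 ≤ k) (y1 y2 ξ : ℝ) (h0 : 0 < y1) (h12 : y1 < y2) (hξ : 0 < ξ) :
    Fsum k y1 ξ < Fsum k y2 ξ := by
  apply Finset.sum_lt_sum
  · intro h hh
    have hden : (0:ℝ) < 1 + ξ * h := by positivity
    gcongr

  · refine ⟨1, by simp; omega, ?_⟩
    have hden : (0:ℝ) < 1 + ξ * (1:ℕ) := by positivity
    have hC : (0:ℝ) < k.choose 1 := by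
      simp [Nat.choose_one_right]; exact_mod_cast hk
    gcongr


lemma Fsum_lt_xi (k : ℕ) (hk : 1 ≤ k) (y ξ1 ξ2 : ℝ) (h0 : 0 < y) (h12 : ξ1 < ξ2) (hξ : 0 < ξ1) :
    Fsum k y ξ2 < Fsum k y ξ1 := by
  apply Finset.sum_lt_sum
  · intro h hh
    have hden : (0:ℝ) < 1 + ξ1 * h := by positivity
    gcongr

  · refine ⟨1, by simp; omega, ?_⟩
    have hC : (0:ℝ) < k.choose 1 := by
      simp [Nat.choose_one_right]; exact_mod_cast hk
    have h1 : (0:ℝ) < 1 + ξ1 * (1:ℕ) := by positivity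
    gcongr

lemma main_contra (k l : ℕ) (hk : 1 ≤ k) (hkl : k < l) (y1 ξ1 y2 ξ2 : ℝ)
    (hy1 : 0 < y1) (hξ1 : 0 < ξ1) (hξ : ξ1 < ξ2) (hy : y1 < y2)
    (hFk : Fsum k y1 ξ1 = Fsum k y2 ξ2) (hFl : Fsum l y1 ξ1 = Fsum l y2 ξ2) : False := by
  have hy2 : 0 < y2 := hy1.trans hy
  have hξ2 : 0 < ξ2 := hξ1.trans hξ
  set d : ℕ → ℝ := fun h => y2 ^ h / (1 + ξ2 * h) - y1 ^ h / (1 + ξ1 * h) with hd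
  have hden : ∀ (ξ : ℝ), 0 < ξ → ∀ h : ℕ, (0:ℝ) < 1 + ξ * h := by
    intro ξ hξ' h; positivity
  have hd0 : d 0 = 0 := by simp [hd]
  -- translate Fsum equalities into sums over d
  have hsum : ∀ m : ℕ, Fsum m y1 ξ1 = Fsum m y2 ξ2 →
      ∑ h ∈ Finset.range (m+1), (m.choose h : ℝ) * d h = 0 := by
    intro m hm
    have : ∑ h ∈ Finset.range (m+1), (m.choose h : ℝ) * d h
        = Fsum m y2 ξ2 - Fsum m y1 ξ1 := by
      rw [Fsum, Fsum, ← Finset.sum_sub_distrib]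
      apply Finset.sum_congr rfl
      intro h _
      simp only [hd]
      ring
    rw [this, hm, sub_self]
  have hsk := hsum k hFk
  have hsl := hsum l hFl
  -- key positivity
  have hkey : ∀ p q : ℕ, 1 ≤ p → p < q → 0 ≤ d p → 0 < d q := by
    intro p q hp hpq hdp
    have hA2 := hden ξ2 hξ2 p
    have hA1 := hden ξ1 hξ1 p
    have hB2 := hden ξ2 hξ2 q
    have hB1 := hden ξ1 hξ1 q
    have h1 : y1 ^ p * (1 + ξ2 * p) ≤ y2 ^ p * (1 + ξ1 * p) := by
      have : y1 ^ p / (1 + ξ1 * p) ≤ y2 ^ p / (1 + ξ2 * p) := by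
        simp only [hd] at hdp; linarith
      rwa [div_le_div_iff₀ hA1 hA2] at this
    have h2 := dpos ξ1 ξ2 y1 y2 hξ1 hξ hy1 hy2 p q hp hpq h1
    have : y1 ^ q / (1 + ξ1 * q) < y2 ^ q / (1 + ξ2 * q) := by
      rwa [div_lt_div_iff₀ hB1 hB2]
    simp only [hd]; linarith
  -- the set of indices in [1,k] where d ≥ 0 is nonempty
  set s : Finset ℕ := (Finset.range (k+1)).filter (fun h => 1 ≤ h ∧ 0 ≤ d h) with hs
  have hsne : s.Nonempty := by
    by_contra hne
    rw [Finset.not_nonempty_iff_eq_empty] at hne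
    have hneg : ∀ h ∈ Finset.range (k+1), (k.choose h : ℝ) * d h ≤ 0 := by
      intro h hh
      rcases Nat.eq_zero_or_pos h with h0 | h1
      · simp [h0, hd0]
      · have : ¬ (1 ≤ h ∧ 0 ≤ d h) := by
          intro hcon
          have : h ∈ s := Finset.mem_filter.mpr ⟨hh, hcon⟩
          simp [hne] at this
        have hdneg : d h < 0 := by
          push_neg at this
          exact this h1
        have : (0:ℝ) ≤ k.choose h := by positivity
        nlinarith
    have hstrict : (k.choose 1 : ℝ) * d 1 < 0 := by
      have h1mem : 1 ∈ Finset.range (k+1) := by simp; omega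
      have : ¬ (1 ≤ 1 ∧ 0 ≤ d 1) := by
        intro hcon
        have : 1 ∈ s := Finset.mem_filter.mpr ⟨h1mem, hcon⟩
        simp [hne] at this
      push_neg at this
      have hdneg : d 1 < 0 := this le_rfl
      have : (0:ℝ) < k.choose 1 := by
        simp [Nat.choose_one_right]; exact_mod_cast hk
      nlinarith
    have : ∑ h ∈ Finset.range (k+1), (k.choose h : ℝ) * d h < 0 := by
      have h1mem : 1 ∈ Finset.range (k+1) := by simp; omega
      calc ∑ h ∈ Finset.range (k+1), (k.choose h : ℝ) * d h
          < ∑ h ∈ Finset.range (k+1), (0:ℝ) :=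
            Finset.sum_lt_sum hneg ⟨1, h1mem, hstrict⟩
        _ = 0 := by simp
    linarith [hsk]
  obtain ⟨p, hps, hpmin⟩ := Finset.exists_min_image s id hsne
  obtain ⟨hprange, hp1, hdp⟩ : p ∈ Finset.range (k+1) ∧ 1 ≤ p ∧ 0 ≤ d p := by
    have := Finset.mem_filter.mp hps
    exact ⟨this.1, this.2.1, this.2.2⟩
  have hpk : p ≤ k := by simp at hprange; omega
  have hneglt : ∀ h, 1 ≤ h → h < p → d h < 0 := by
    intro h h1 hhp
    by_contra hcon
    push_neg at hcon
    have hmem : h ∈ s := Finset.mem_filter.mpr ⟨by simp; omega, h1, hcon⟩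
    have := hpmin h hmem
    simp at this; omega
  have hposgt : ∀ h, p < h → 0 < d h := fun h hh => hkey p h hp1 hh hdp
  -- ratio
  set rp : ℝ := (l.choose p : ℝ) / (k.choose p) with hrp
  have hCk : ∀ h, h ≤ k → (0:ℝ) < k.choose h := by
    intro h hh; exact_mod_cast Nat.choose_pos hh
  -- head inequality
  have hhead : ∀ h ∈ Finset.range (k+1), rp * ((k.choose h : ℝ) * d h) ≤ (l.choose h : ℝ) * d h := by
    intro h hh
    have hhk : h ≤ k := by simp at hh; omega
    have hCkh := hCk h hhk
    have hident : (l.choose h : ℝ) * d h = ((l.choose h : ℝ) / (k.choose h)) * ((k.choose h : ℝ) * d h) := by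
      field_simp
    rcases lt_trichotomy h p with hlt | heq | hgt
    · rcases Nat.eq_zero_or_pos h with h0 | h1
      · simp [h0, hd0]
      · have hdneg : d h < 0 := hneglt h h1 hlt
        have hr : (l.choose h : ℝ) / (k.choose h) ≤ rp := ratio_mono k l hkl.le p hpk h hlt.le
        rw [hident]
        have hw : (k.choose h : ℝ) * d h ≤ 0 := by nlinarith
        exact mul_le_mul_of_nonpos_right hr hw
    · subst heq; rw [hident]
    · have hdpos' : 0 < d h := hposgt h hgt
      have hr : rp ≤ (l.choose h : ℝ) / (k.choose h) := ratio_mono k l hkl.le h hhk p hgt.le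
      rw [hident]
      have hw : (0:ℝ) ≤ (k.choose h : ℝ) * d h := by positivity
      exact mul_le_mul_of_nonneg_right hr hw
  have hheadsum : 0 ≤ ∑ h ∈ Finset.range (k+1), (l.choose h : ℝ) * d h := by
    have := Finset.sum_le_sum hhead
    rw [← Finset.mul_sum, hsk, mul_zero] at this
    exact this
  -- tail positive
  have htail : 0 < ∑ h ∈ Finset.Ico (k+1) (l+1), (l.choose h : ℝ) * d h := by
    apply Finset.sum_pos
    · intro h hh
      rw [Finset.mem_Ico] at hh
      have hd' : 0 < d h := hposgt h (by omega)
      have hC : (0:ℝ) < l.choose h := by exact_mod_cast Nat.choose_pos (by omega : h ≤ l)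
      positivity
    · exact ⟨k+1, Finset.mem_Ico.mpr ⟨le_rfl, by omega⟩⟩
  -- combine
  have hsplit : ∑ h ∈ Finset.range (k+1), (l.choose h : ℝ) * d h
      + ∑ h ∈ Finset.Ico (k+1) (l+1), (l.choose h : ℝ) * d h
      = ∑ h ∈ Finset.range (l+1), (l.choose h : ℝ) * d h := by
    simp only [Finset.range_eq_Ico]
    exact Finset.sum_Ico_consecutive _ (by omega) (by omega)
  rw [hsl] at hsplit
  linarith

theorem stmt_9 (k l : ℕ) (hk : 1 ≤ k) (hkl : k < l) :
    Set.InjOn (fun p : ℝ × ℝ => (gkmer k p.1 p.2, gkmer l p.1 p.2))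
      (Set.Ioi 0 ×ˢ Set.Ioi 0) := by
  have hgF : ∀ (m : ℕ) (y ξ : ℝ), gkmer m y ξ = 1 - (1 / 4 ^ m) * Fsum m y ξ := fun _ _ _ => rfl
  rintro ⟨y1, ξ1⟩ ⟨hy1, hξ1⟩ ⟨y2, ξ2⟩ ⟨hy2, hξ2⟩ heq
  simp only [Set.mem_Ioi] at hy1 hξ1 hy2 hξ2
  simp only [Prod.mk.injEq] at heq
  obtain ⟨hgk, hgl⟩ := heq
  have hF : ∀ m : ℕ, gkmer m y1 ξ1 = gkmer m y2 ξ2 → Fsum m y1 ξ1 = Fsum m y2 ξ2 := by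
    intro m hm
    rw [hgF, hgF] at hm
    have h4 : (0:ℝ) < 1 / 4 ^ m := by positivity
    have : (1 / 4 ^ m : ℝ) * Fsum m y1 ξ1 = (1 / 4 ^ m) * Fsum m y2 ξ2 := by linarith
    exact mul_left_cancel₀ h4.ne' this
  have hFk := hF k hgk
  have hFl := hF l hgl
  have hl1 : 1 ≤ l := hk.trans hkl.le
  have hy_of_xi : ∀ a1 b1 a2 b2 : ℝ, 0 < a1 → 0 < a2 → 0 < b1 → b1 < b2 →
      Fsum k a1 b1 = Fsum k a2 b2 → a1 < a2 := by
    intro a1 b1 a2 b2 ha1 ha2 hb1 hb hFeq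
    have h1 : Fsum k a2 b2 < Fsum k a2 b1 := Fsum_lt_xi k hk a2 b1 b2 ha2 hb hb1
    by_contra hcon
    push_neg at hcon
    rcases eq_or_lt_of_le hcon with he | hlt
    · rw [← he] at hFeq; linarith
    · have := Fsum_lt_y k hk a2 a1 b1 ha2 hlt hb1
      linarith
  rcases lt_trichotomy ξ1 ξ2 with hlt | heq | hgt
  · exact absurd (hFk) (by
      intro _
      exact main_contra k l hk hkl y1 ξ1 y2 ξ2 hy1 hξ1 hlt
        (hy_of_xi y1 ξ1 y2 ξ2 hy1 hy2 hξ1 hlt hFk) hFk hFl)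
  · subst heq
    have hyeq : y1 = y2 := by
      rcases lt_trichotomy y1 y2 with h | h | h
      · have := Fsum_lt_y k hk y1 y2 ξ1 hy1 h hξ1; exact absurd hFk (by linarith [this])
      · exact h
      · have := Fsum_lt_y k hk y2 y1 ξ1 hy2 h hξ1; exact absurd hFk (by intro e; linarith)
    rw [hyeq]
  · exfalso
    exact main_contra k l hk hkl y2 ξ2 y1 ξ1 hy2 hξ2 hgt
      (hy_of_xi y2 ξ2 y1 ξ1 hy2 hy1 hξ2 hgt hFk.symm) hFk.symm hFl.symm
end
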